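/- Let m, N_L, N_R be positive integers, let w ∈ ℝ^{m×(N_L+N_R)} be a fixed weight matrix, let μ_1, …, μ_{N_L+N_R} ∈ ℝ^m be centers with μ_j ≠ μ_l for every j ≠ l, let α_1, …, α_{N_L+N_R} ∈ (0,∞)^m be fixed strictly positive base steepness vectors, fix l ∈ {N_L+1, …, N_L+N_R}, and let y ∈ ℝ^m satisfy y_i ≠ μ_{ji} for every i = 1, …, m and every j = 1, …, N_L+N_R. For t > 0 define the vector field F^t: ℝ^m → ℝ^m by F^t_i(z) := Σ_{j=1}^{N_L} w_{ij} Λ(z; μ_j, tα_j) + Σ_{k=N_L+1}^{N_L+N_R} w_{ik} P(z; μ_k, tα_k). Then the Lie derivative of the conjunctive RBF, ∇_y P(y; μ_l, tα_l) · F^t(y), minus the combination Σ_{i=1}^m Σ_{j=1}^{N_L} tα_{li} w_{ij} (1 − 2λ(y_i; μ_{li}, tα_{li})) H(y; (μ_j, tα_j), (μ_l, tα_l)), converges to 0 exponentially as t → ∞: there exist constants C, c > 0 such that the absolute value of this difference is at most C·exp(−c·t) for all t ≥ 1. -/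

import Mathlib

open MeasureTheory ProbabilityTheory Real

noncomputable def logisticFun (y μ α : ℝ) : ℝ := 1 / (1 + Real.exp (-α * (y - μ)))

noncomputable def rbfFun (y μ α : ℝ) : ℝ :=
  Real.exp (-α * (y - μ)) / (1 + Real.exp (-α * (y - μ))) ^ 2

noncomputable def conjLog {m : ℕ} (y μ α : Fin m → ℝ) : ℝ :=
  ∏ i, logisticFun (y i) (μ i) (α i)

noncomputable def conjRBF {m : ℕ} (y μ α : Fin m → ℝ) : ℝ :=
  ∏ i, rbfFun (y i) (μ i) (α i)

open scoped Classical in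
/-- Decision function `H(y; (μl, αl), (μk, αk))`. -/
noncomputable def decisionH {m : ℕ} (y μl αl μk αk : Fin m → ℝ) : ℝ :=
  if ∀ i, μl i < μk i then conjRBF y μk αk else 0

lemma rbf_nonneg (y μ α : ℝ) : 0 ≤ rbfFun y μ α := by
  unfold rbfFun; positivity

lemma rbf_le_one (y μ α : ℝ) : rbfFun y μ α ≤ 1 := by
  unfold rbfFun
  rw [div_le_one (by positivity)]
  nlinarith [Real.exp_pos (-α * (y - μ))]

lemma logistic_pos (y μ α : ℝ) : 0 < logisticFun y μ α := by
  unfold logisticFun; positivity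

lemma logistic_lt_one (y μ α : ℝ) : logisticFun y μ α < 1 := by
  unfold logisticFun
  rw [div_lt_one (by positivity)]
  linarith [Real.exp_pos (-α * (y - μ))]

lemma abs_one_sub_two_logistic (y μ α : ℝ) : |1 - 2 * logisticFun y μ α| ≤ 1 := by
  have h1 := logistic_pos y μ α
  have h2 := logistic_lt_one y μ α
  rw [abs_le]; constructor <;> linarith

lemma rbf_le_exp (y μ α : ℝ) : rbfFun y μ α ≤ Real.exp (-|α * (y - μ)|) := by
  unfold rbfFun
  set u := α * (y - μ) with hu
  have h : -α * (y - μ) = -u := by rw [hu]; ring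
  rw [h]
  rcases le_or_gt 0 u with h0 | h0
  · rw [abs_of_nonneg h0]
    have h1 : (1:ℝ) ≤ (1 + Real.exp (-u)) ^ 2 := by nlinarith [Real.exp_pos (-u)]
    calc Real.exp (-u) / (1 + Real.exp (-u)) ^ 2 ≤ Real.exp (-u) / 1 := by
          apply div_le_div_of_nonneg_left (le_of_lt (Real.exp_pos _)) one_pos h1
      _ = Real.exp (-u) := by ring
  · rw [abs_of_neg h0]
    have he : Real.exp (-u) * Real.exp (-(-u)) = 1 := by
      rw [← Real.exp_add]; ring_nf; exact Real.exp_zero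
    rw [div_le_iff₀ (by positivity)]
    nlinarith [Real.exp_pos (-u), Real.exp_pos (-(-u))]

lemma hasDerivAt_rbfFun (μ α x : ℝ) :
    HasDerivAt (fun z => rbfFun z μ α)
      (α * rbfFun x μ α * (1 - 2 * logisticFun x μ α)) x := by
  have h0 : HasDerivAt (fun z : ℝ => -α * (z - μ)) (-α) x := by
    simpa using ((hasDerivAt_id x).sub_const μ).const_mul (-α)
  have he : HasDerivAt (fun z : ℝ => Real.exp (-α * (z - μ)))
      (Real.exp (-α * (x - μ)) * (-α)) x := h0.exp
  have hd : HasDerivAt (fun z : ℝ => (1 + Real.exp (-α * (z - μ))) ^ 2)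
      (2 * (1 + Real.exp (-α * (x - μ))) ^ 1 * (Real.exp (-α * (x - μ)) * (-α))) x :=
    (he.const_add 1).pow 2
  have hne : (1 + Real.exp (-α * (x - μ))) ^ 2 ≠ 0 := by positivity
  have h := he.div hd hne
  refine HasDerivAt.congr_deriv h ?_
  unfold rbfFun logisticFun
  have hE := Real.exp_pos (-α * (x - μ))
  field_simp
  ring

lemma conjRBF_nonneg {m : ℕ} (y μ β : Fin m → ℝ) : 0 ≤ conjRBF y μ β :=
  Finset.prod_nonneg fun i _ => rbf_nonneg _ _ _

lemma conjRBF_le_one {m : ℕ} (y μ β : Fin m → ℝ) : conjRBF y μ β ≤ 1 :=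
  Finset.prod_le_one (fun i _ => rbf_nonneg _ _ _) (fun i _ => rbf_le_one _ _ _)

lemma conjLog_nonneg {m : ℕ} (y μ β : Fin m → ℝ) : 0 ≤ conjLog y μ β :=
  Finset.prod_nonneg fun i _ => (logistic_pos _ _ _).le

lemma conjLog_le_one {m : ℕ} (y μ β : Fin m → ℝ) : conjLog y μ β ≤ 1 :=
  Finset.prod_le_one (fun i _ => (logistic_pos _ _ _).le)
    (fun i _ => (logistic_lt_one _ _ _).le)

lemma conjRBF_le_apply {m : ℕ} (y μ β : Fin m → ℝ) (i0 : Fin m) :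
    conjRBF y μ β ≤ rbfFun (y i0) (μ i0) (β i0) := by
  classical
  unfold conjRBF
  rw [← Finset.mul_prod_erase Finset.univ _ (Finset.mem_univ i0)]
  exact mul_le_of_le_one_right (rbf_nonneg _ _ _)
    (Finset.prod_le_one (fun i _ => rbf_nonneg _ _ _) (fun i _ => rbf_le_one _ _ _))

theorem lie_deriv_conjRBF_exp_approx
    (m NL NR : ℕ) (hm : 0 < m) (hNL : 0 < NL) (hNR : 0 < NR)
    (wL : Fin m → Fin NL → ℝ) (wR : Fin m → Fin NR → ℝ)
    (μL : Fin NL → Fin m → ℝ) (μR : Fin NR → Fin m → ℝ)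
    (αL : Fin NL → Fin m → ℝ) (αR : Fin NR → Fin m → ℝ)
    (hαL : ∀ j i, 0 < αL j i) (hαR : ∀ k i, 0 < αR k i)
    (l : Fin NR)
    (hdistL : ∀ j : Fin NL, μL j ≠ μR l)
    (hdistR : ∀ k : Fin NR, k ≠ l → μR k ≠ μR l)
    (y : Fin m → ℝ)
    (hyL : ∀ i j, y i ≠ μL j i) (hyR : ∀ i k, y i ≠ μR k i) :
    ∃ C c : ℝ, 0 < C ∧ 0 < c ∧ ∀ t : ℝ, 1 ≤ t →
      |fderiv ℝ (fun z : Fin m → ℝ => conjRBF z (μR l) (fun i => t * αR l i)) y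
          (fun i => (∑ j, wL i j * conjLog y (μL j) (fun i' => t * αL j i'))
            + ∑ k, wR i k * conjRBF y (μR k) (fun i' => t * αR k i'))
        - ∑ i, ∑ j, t * αR l i * wL i j
            * (1 - 2 * logisticFun (y i) (μR l i) (t * αR l i))
            * decisionH y (μL j) (fun i' => t * αL j i') (μR l) (fun i' => t * αR l i')|
      ≤ C * Real.exp (-c * t) := by
  classical
  set i₀ : Fin m := ⟨0, hm⟩ with hi₀
  set δ : ℝ := αR l i₀ * |y i₀ - μR l i₀| with hδdef
  have hδ : 0 < δ := mul_pos (hαR l i₀) (abs_pos.mpr (sub_ne_zero.mpr (hyR i₀ l)))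
  set W : Fin m → ℝ := fun i => (∑ j, |wL i j|) + ∑ k, |wR i k| with hW
  have hWnn : ∀ i, 0 ≤ W i := fun i => by
    apply add_nonneg <;> exact Finset.sum_nonneg fun _ _ => abs_nonneg _
  set A : ℝ := ∑ i, αR l i * W i with hA
  set B : ℝ := ∑ i, ∑ j, αR l i * |wL i j| with hB
  have hAnn : 0 ≤ A := Finset.sum_nonneg fun i _ => mul_nonneg (hαR l i).le (hWnn i)
  have hBnn : 0 ≤ B := Finset.sum_nonneg fun i _ =>
    Finset.sum_nonneg fun j _ => mul_nonneg (hαR l i).le (abs_nonneg _)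
  refine ⟨(A + B + 1) * (2 / δ), δ / 2, by positivity, by positivity, fun t ht => ?_⟩
  have ht0 : (0:ℝ) < t := lt_of_lt_of_le one_pos ht
  set β : Fin m → ℝ := fun i => t * αR l i with hβ
  have hβi : ∀ i, β i = t * αR l i := fun i => rfl
  have hβpos : ∀ i, 0 < β i := fun i => mul_pos ht0 (hαR l i)
  -- exponential bound on the conjunctive RBF at the fixed point
  have habs : |β i₀ * (y i₀ - μR l i₀)| = δ * t := by
    rw [hβi i₀, hδdef, abs_mul, abs_mul, abs_of_pos ht0, abs_of_pos (hαR l i₀)]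
    ring
  have hPle : conjRBF y (μR l) β ≤ Real.exp (-(δ * t)) := by
    calc conjRBF y (μR l) β ≤ rbfFun (y i₀) (μR l i₀) (β i₀) := conjRBF_le_apply _ _ _ _
      _ ≤ Real.exp (-|β i₀ * (y i₀ - μR l i₀)|) := rbf_le_exp _ _ _
      _ = Real.exp (-(δ * t)) := by rw [habs]
  have hE0 : (0:ℝ) < Real.exp (-(δ * t)) := Real.exp_pos _
  -- the derivative
  have hprod : HasFDerivAt (fun z : Fin m → ℝ => conjRBF z (μR l) β)
      (∑ i, (∏ j ∈ Finset.univ.erase i, rbfFun (y j) (μR l j) (β j)) •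
        ((β i * rbfFun (y i) (μR l i) (β i) *
          (1 - 2 * logisticFun (y i) (μR l i) (β i))) •
          (ContinuousLinearMap.proj i : (Fin m → ℝ) →L[ℝ] ℝ))) y := by
    exact HasFDerivAt.finset_prod
      (fun i _ => by
        have := (hasDerivAt_rbfFun (μR l i) (β i) (y i)).comp_hasFDerivAt y
          (hasFDerivAt_apply (𝕜 := ℝ) i y)
        exact this)
  rw [hprod.fderiv]
  simp only [ContinuousLinearMap.sum_apply, ContinuousLinearMap.smul_apply,
    ContinuousLinearMap.proj_apply, smul_eq_mul]
  -- bound on the vector field components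
  have hv : ∀ i : Fin m,
      |(∑ j, wL i j * conjLog y (μL j) fun i' => t * αL j i')
        + ∑ k, wR i k * conjRBF y (μR k) fun i' => t * αR k i'| ≤ W i := by
    intro i
    have h1 : |∑ j, wL i j * conjLog y (μL j) fun i' => t * αL j i'| ≤ ∑ j, |wL i j| := by
      refine (Finset.abs_sum_le_sum_abs _ _).trans (Finset.sum_le_sum fun j _ => ?_)
      rw [abs_mul]
      calc |wL i j| * |conjLog y (μL j) fun i' => t * αL j i'| ≤ |wL i j| * 1 := by
            apply mul_le_mul_of_nonneg_left _ (abs_nonneg _)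
            rw [abs_of_nonneg (conjLog_nonneg _ _ _)]
            exact conjLog_le_one _ _ _
        _ = |wL i j| := mul_one _
    have h2 : |∑ k, wR i k * conjRBF y (μR k) fun i' => t * αR k i'| ≤ ∑ k, |wR i k| := by
      refine (Finset.abs_sum_le_sum_abs _ _).trans (Finset.sum_le_sum fun k _ => ?_)
      rw [abs_mul]
      calc |wR i k| * |conjRBF y (μR k) fun i' => t * αR k i'| ≤ |wR i k| * 1 := by
            apply mul_le_mul_of_nonneg_left _ (abs_nonneg _)
            rw [abs_of_nonneg (conjRBF_nonneg _ _ _)]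
            exact conjRBF_le_one _ _ _
        _ = |wR i k| := mul_one _
    calc |(∑ j, wL i j * conjLog y (μL j) fun i' => t * αL j i')
          + ∑ k, wR i k * conjRBF y (μR k) fun i' => t * αR k i'|
        ≤ |∑ j, wL i j * conjLog y (μL j) fun i' => t * αL j i'|
          + |∑ k, wR i k * conjRBF y (μR k) fun i' => t * αR k i'| := abs_add_le _ _
      _ ≤ W i := by rw [hW]; exact add_le_add h1 h2
  -- compare: per-term bound for the fderiv sum
  have hXterm : ∀ i : Fin m,
      |(∏ j ∈ Finset.univ.erase i, rbfFun (y j) (μR l j) (β j)) *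
        (β i * rbfFun (y i) (μR l i) (β i) *
          (1 - 2 * logisticFun (y i) (μR l i) (β i)) *
          ((∑ j, wL i j * conjLog y (μL j) fun i' => t * αL j i')
            + ∑ k, wR i k * conjRBF y (μR k) fun i' => t * αR k i'))|
      ≤ αR l i * W i * (t * Real.exp (-(δ * t))) := by
    intro i
    have hpnn : 0 ≤ ∏ j ∈ Finset.univ.erase i, rbfFun (y j) (μR l j) (β j) :=
      Finset.prod_nonneg fun j _ => rbf_nonneg _ _ _
    have hρnn := rbf_nonneg (y i) (μR l i) (β i)
    have hfull : (∏ j ∈ Finset.univ.erase i, rbfFun (y j) (μR l j) (β j)) *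
        rbfFun (y i) (μR l i) (β i) = conjRBF y (μR l) β := by
      unfold conjRBF
      exact Finset.prod_erase_mul Finset.univ _ (Finset.mem_univ i)
    have hs := abs_one_sub_two_logistic (y i) (μR l i) (β i)
    have hvi := hv i
    calc |(∏ j ∈ Finset.univ.erase i, rbfFun (y j) (μR l j) (β j)) *
          (β i * rbfFun (y i) (μR l i) (β i) *
            (1 - 2 * logisticFun (y i) (μR l i) (β i)) *
            ((∑ j, wL i j * conjLog y (μL j) fun i' => t * αL j i')
              + ∑ k, wR i k * conjRBF y (μR k) fun i' => t * αR k i'))|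
        = ((∏ j ∈ Finset.univ.erase i, rbfFun (y j) (μR l j) (β j)) *
            rbfFun (y i) (μR l i) (β i)) * β i *
            (|1 - 2 * logisticFun (y i) (μR l i) (β i)| *
              |(∑ j, wL i j * conjLog y (μL j) fun i' => t * αL j i')
                + ∑ k, wR i k * conjRBF y (μR k) fun i' => t * αR k i'|) := by
          simp only [abs_mul, abs_of_nonneg hpnn, abs_of_nonneg hρnn,
            abs_of_pos (hβpos i)]
          ring
      _ ≤ Real.exp (-(δ * t)) * β i * (1 * W i) := by
          apply mul_le_mul
          · apply mul_le_mul_of_nonneg_right _ (hβpos i).le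
            rw [hfull]; exact hPle
          · exact mul_le_mul hs hvi (abs_nonneg _) one_pos.le
          · exact mul_nonneg (abs_nonneg _) (abs_nonneg _)
          · exact mul_nonneg hE0.le (hβpos i).le
      _ = αR l i * W i * (t * Real.exp (-(δ * t))) := by rw [hβi i]; ring
  -- bound on the fderiv sum
  have hX : |∑ i, (∏ j ∈ Finset.univ.erase i, rbfFun (y j) (μR l j) (β j)) *
        (β i * rbfFun (y i) (μR l i) (β i) *
          (1 - 2 * logisticFun (y i) (μR l i) (β i)) *
          ((∑ j, wL i j * conjLog y (μL j) fun i' => t * αL j i')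
            + ∑ k, wR i k * conjRBF y (μR k) fun i' => t * αR k i'))|
      ≤ A * (t * Real.exp (-(δ * t))) := by
    refine (Finset.abs_sum_le_sum_abs _ _).trans ?_
    rw [hA, Finset.sum_mul]
    exact Finset.sum_le_sum fun i _ => hXterm i
  -- bound on the decision-function sum
  have hH : ∀ (μl αl : Fin m → ℝ), |decisionH y μl αl (μR l) β| ≤ Real.exp (-(δ * t)) := by
    intro μl αl
    unfold decisionH
    split
    · rw [abs_of_nonneg (conjRBF_nonneg _ _ _)]; exact hPle
    · simpa using hE0.le
  have hY : |∑ i, ∑ j, t * αR l i * wL i j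
        * (1 - 2 * logisticFun (y i) (μR l i) (t * αR l i))
        * decisionH y (μL j) (fun i' => t * αL j i') (μR l) β|
      ≤ B * (t * Real.exp (-(δ * t))) := by
    refine (Finset.abs_sum_le_sum_abs _ _).trans ?_
    rw [hB, Finset.sum_mul]
    refine Finset.sum_le_sum fun i _ => ?_
    refine (Finset.abs_sum_le_sum_abs _ _).trans ?_
    rw [Finset.sum_mul]
    refine Finset.sum_le_sum fun j _ => ?_
    have hs : |1 - 2 * logisticFun (y i) (μR l i) (t * αR l i)| ≤ 1 :=
      abs_one_sub_two_logistic _ _ _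
    have hHj := hH (μL j) (fun i' => t * αL j i')
    calc |t * αR l i * wL i j * (1 - 2 * logisticFun (y i) (μR l i) (t * αR l i))
          * decisionH y (μL j) (fun i' => t * αL j i') (μR l) β|
        = (t * αR l i * |wL i j|) *
            (|1 - 2 * logisticFun (y i) (μR l i) (t * αR l i)| *
              |decisionH y (μL j) (fun i' => t * αL j i') (μR l) β|) := by
          simp only [abs_mul, abs_of_pos ht0, abs_of_pos (hαR l i)]
          ring
      _ ≤ (t * αR l i * |wL i j|) * (1 * Real.exp (-(δ * t))) := by
          apply mul_le_mul_of_nonneg_left _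
            (mul_nonneg (mul_nonneg ht0.le (hαR l i).le) (abs_nonneg _))
          exact mul_le_mul hs hHj (abs_nonneg _) one_pos.le
      _ = αR l i * |wL i j| * (t * Real.exp (-(δ * t))) := by ring
  -- combine
  have hexp : t * Real.exp (-(δ * t)) ≤ (2 / δ) * Real.exp (-(δ / 2) * t) := by
    have h1 : δ / 2 * t ≤ Real.exp (δ / 2 * t) := by
      nlinarith [Real.add_one_le_exp (δ / 2 * t), mul_pos (half_pos hδ) ht0]
    calc t * Real.exp (-(δ * t)) = (2 / δ) * (δ / 2 * t) * Real.exp (-(δ * t)) := by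
          field_simp
      _ ≤ (2 / δ) * Real.exp (δ / 2 * t) * Real.exp (-(δ * t)) := by
          apply mul_le_mul_of_nonneg_right _ hE0.le
          apply mul_le_mul_of_nonneg_left h1 (by positivity)
      _ = (2 / δ) * Real.exp (-(δ / 2) * t) := by
          rw [mul_assoc, ← Real.exp_add]
          congr 1
          ring
  calc |(∑ i, (∏ j ∈ Finset.univ.erase i, rbfFun (y j) (μR l j) (β j)) *
        (β i * rbfFun (y i) (μR l i) (β i) *
          (1 - 2 * logisticFun (y i) (μR l i) (β i)) *
          ((∑ j, wL i j * conjLog y (μL j) fun i' => t * αL j i')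
            + ∑ k, wR i k * conjRBF y (μR k) fun i' => t * αR k i')))
      - ∑ i, ∑ j, t * αR l i * wL i j
        * (1 - 2 * logisticFun (y i) (μR l i) (t * αR l i))
        * decisionH y (μL j) (fun i' => t * αL j i') (μR l) β|
      ≤ |∑ i, (∏ j ∈ Finset.univ.erase i, rbfFun (y j) (μR l j) (β j)) *
        (β i * rbfFun (y i) (μR l i) (β i) *
          (1 - 2 * logisticFun (y i) (μR l i) (β i)) *
          ((∑ j, wL i j * conjLog y (μL j) fun i' => t * αL j i')
            + ∑ k, wR i k * conjRBF y (μR k) fun i' => t * αR k i'))|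
      + |∑ i, ∑ j, t * αR l i * wL i j
        * (1 - 2 * logisticFun (y i) (μR l i) (t * αR l i))
        * decisionH y (μL j) (fun i' => t * αL j i') (μR l) β| := abs_sub _ _
    _ ≤ A * (t * Real.exp (-(δ * t))) + B * (t * Real.exp (-(δ * t))) := add_le_add hX hY
    _ = (A + B) * (t * Real.exp (-(δ * t))) := by ring
    _ ≤ (A + B) * ((2 / δ) * Real.exp (-(δ / 2) * t)) := by
        apply mul_le_mul_of_nonneg_left hexp (by linarith)
    _ ≤ (A + B + 1) * (2 / δ) * Real.exp (-(δ / 2) * t) := by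
        have := Real.exp_pos (-(δ / 2) * t)
        have h2δ : (0:ℝ) < 2 / δ := by positivity
        nlinarith
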